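/- Let (X,S) be a non-degenerate, involutive and braided set-theoretical solution on a finite set X, and let M be its structure monoid. Then the elements of X admit a right lcm Δ in M, and Δ is a Garside element of M: the set of left divisors of Δ coincides with the set of right divisors of Δ (where a right-divides Δ if Δ = c·a for some c ∈ M), this set of divisors is finite, and it generates M. -/

import Mathlib

set_option linter.unusedSectionVars false


namespace YBE

/-- `(X,S)` is non-degenerate: all the maps `g_x = y ↦ S(x,y).1` and
`f_y = x ↦ S(x,y).2` are bijective. -/
def Nondegenerate {X : Type*} (S : X × X → X × X) : Prop :=
  (∀ x : X, Function.Bijective fun y => (S (x, y)).1) ∧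
  (∀ y : X, Function.Bijective fun x => (S (x, y)).2)

/-- `(X,S)` is involutive: `S ∘ S = id`. -/
def InvolutiveSol {X : Type*} (S : X × X → X × X) : Prop := S ∘ S = id

/-- `S¹² = S × id` on `X × X × X`. -/
def S12 {X : Type*} (S : X × X → X × X) : X × X × X → X × X × X :=
  fun p => ((S (p.1, p.2.1)).1, (S (p.1, p.2.1)).2, p.2.2)

/-- `S²³ = id × S` on `X × X × X`. -/
def S23 {X : Type*} (S : X × X → X × X) : X × X × X → X × X × X :=
  fun p => (p.1, S (p.2.1, p.2.2))

/-- `(X,S)` is braided: `S¹² ∘ S²³ ∘ S¹² = S²³ ∘ S¹² ∘ S²³`. -/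
def BraidedSol {X : Type*} (S : X × X → X × X) : Prop :=
  S12 S ∘ S23 S ∘ S12 S = S23 S ∘ S12 S ∘ S23 S

/-- The map `g_x : y ↦ S(x,y).1`. -/
def gmap {X : Type*} (S : X × X → X × X) (x : X) : X → X := fun y => (S (x, y)).1

/-- The map `f_y : x ↦ S(x,y).2`. -/
def fmap {X : Type*} (S : X × X → X × X) (y : X) : X → X := fun x => (S (x, y)).2

/-- The inverse `g_x⁻¹` of the (bijective) map `g_x`. -/
noncomputable def ginv {X : Type*} [Nonempty X] (S : X × X → X × X) (x : X) : X → X :=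
  Function.invFun (gmap S x)

/-- The inverse `f_y⁻¹` of the (bijective) map `f_y`. -/
noncomputable def finv {X : Type*} [Nonempty X] (S : X × X → X × X) (y : X) : X → X :=
  Function.invFun (fmap S y)

/-- The defining relations of the structure monoid: `x·y = t·z` whenever `S(x,y) = (t,z)`. -/
def ybRel {X : Type*} (S : X × X → X × X) : FreeMonoid X → FreeMonoid X → Prop :=
  fun a b => ∃ x y : X, a = FreeMonoid.of x * FreeMonoid.of y ∧
    b = FreeMonoid.of (S (x, y)).1 * FreeMonoid.of (S (x, y)).2

/-- The structure monoid of `(X,S)`: the monoid presented by generating set `X` and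
relations `x·y = t·z` for each `x,y,t,z` with `S(x,y) = (t,z)`. -/
abbrev StructureMonoid {X : Type*} (S : X × X → X × X) : Type _ :=
  (conGen (ybRel S)).Quotient

/-- The image in the structure monoid of a generator `x ∈ X`. -/
def smi {X : Type*} (S : X × X → X × X) (x : X) : StructureMonoid S :=
  (conGen (ybRel S)).mk' (FreeMonoid.of x)

/-- The defining relations of the structure group, as elements of the free group. -/
def ybGRels {X : Type*} (S : X × X → X × X) : Set (FreeGroup X) :=
  {w | ∃ x y : X, w = FreeGroup.of x * FreeGroup.of y *
    (FreeGroup.of (S (x, y)).1 * FreeGroup.of (S (x, y)).2)⁻¹}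

/-- The structure group of `(X,S)`: the group presented by generating set `X` and
relations `x·y = t·z` for each `x,y,t,z` with `S(x,y) = (t,z)`. -/
abbrev StructureGroup {X : Type*} (S : X × X → X × X) : Type _ :=
  PresentedGroup (ybGRels S)

/-- `a` left-divides `b`. -/
def LDvd {M : Type*} [Monoid M] (a b : M) : Prop := ∃ c, b = a * c

/-- `m` is a right lcm of the family `a`: each `a i` left-divides `m`, and `m`
left-divides every common right multiple of the `a i`. -/
def IsRightLcm {M : Type*} [Monoid M] {ι : Sort*} (a : ι → M) (m : M) : Prop :=
  (∀ i, LDvd (a i) m) ∧ ∀ w, (∀ i, LDvd (a i) w) → LDvd m w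

section Identities

variable {X : Type*} {S : X × X → X × X}

lemma S_S (hinv : InvolutiveSol S) (p : X × X) : S (S p) = p := congrFun hinv p

lemma I1 (hinv : InvolutiveSol S) (x y : X) :
    (S ((S (x, y)).1, (S (x, y)).2)).1 = x := by
  have h := S_S hinv (x, y)
  rw [show ((S (x, y)).1, (S (x, y)).2) = S (x, y) from rfl, h]

lemma I2 (hinv : InvolutiveSol S) (x y : X) :
    (S ((S (x, y)).1, (S (x, y)).2)).2 = y := by
  have h := S_S hinv (x, y)
  rw [show ((S (x, y)).1, (S (x, y)).2) = S (x, y) from rfl, h]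

lemma Btriple (hbr : BraidedSol S) (x y w : X) :
    S12 S (S23 S (S12 S (x, y, w))) = S23 S (S12 S (S23 S (x, y, w))) :=
  congrFun hbr (x, y, w)

/-- first coordinate of the braid relation -/
lemma B1 (hbr : BraidedSol S) (x y w : X) :
    (S ((S (x, y)).1, (S ((S (x, y)).2, w)).1)).1 = (S (x, (S (y, w)).1)).1 := by
  have h := Btriple hbr x y w
  simp only [S12, S23, Prod.ext_iff] at h
  exact h.1

/-- third coordinate of the braid relation -/
lemma B3 (hbr : BraidedSol S) (x y w : X) :
    (S ((S (x, y)).2, w)).2 = (S ((S (x, (S (y, w)).1)).2, (S (y, w)).2)).2 := by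
  have h := Btriple hbr x y w
  simp only [S12, S23, Prod.ext_iff] at h
  exact h.2.2

end Identities

section SD

variable (X : Type*)

/-- semidirect product `ℕ^X ⋊ Sym(X)` -/
structure SD where
  a : X → ℕ
  p : Equiv.Perm X

variable {X}

instance : One (SD X) := ⟨⟨fun _ => 0, 1⟩⟩
instance : Mul (SD X) := ⟨fun u v => ⟨fun t => u.a t + v.a (u.p.symm t), u.p * v.p⟩⟩

lemma SD.one_a : (1 : SD X).a = fun _ => 0 := rfl
lemma SD.one_p : (1 : SD X).p = 1 := rfl
lemma SD.mul_a (u v : SD X) : (u * v).a = fun t => u.a t + v.a (u.p.symm t) := rfl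
lemma SD.mul_p (u v : SD X) : (u * v).p = u.p * v.p := rfl

lemma perm_mul_symm (f g : Equiv.Perm X) (t : X) : (f * g).symm t = g.symm (f.symm t) := rfl

instance : Monoid (SD X) where
  one_mul u := by
    cases u with
    | mk a p => 
      show SD.mk _ _ = SD.mk a p
      simp [SD.one_a, SD.one_p]; rfl
  mul_one u := by
    cases u with
    | mk a p =>
      show SD.mk _ _ = SD.mk a p
      simp [SD.one_a, SD.one_p]
  mul_assoc u v w := by
    show SD.mk _ _ = SD.mk _ _
    simp only [SD.mul_a, SD.mul_p, SD.mk.injEq, perm_mul_symm]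
    constructor
    · funext t; simp [Nat.add_assoc]
    · exact mul_assoc _ _ _

end SD


section Homs

variable {X : Type*} {S : X × X → X × X}

/-- `σ_x` as a permutation -/
noncomputable def sig (hnd : Nondegenerate S) (x : X) : Equiv.Perm X :=
  Equiv.ofBijective _ (hnd.1 x)

/-- `τ_y` as a permutation -/
noncomputable def tauE (hnd : Nondegenerate S) (y : X) : Equiv.Perm X :=
  Equiv.ofBijective _ (hnd.2 y)

lemma sig_apply (hnd : Nondegenerate S) (x y : X) : sig hnd x y = (S (x, y)).1 := rfl
lemma tauE_apply (hnd : Nondegenerate S) (y x : X) : tauE hnd y x = (S (x, y)).2 := rfl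

variable [DecidableEq X]

/-- indicator function of `x` -/
def eX (x : X) : X → ℕ := fun t => if t = x then 1 else 0

lemma eX_self (x : X) : eX x x = 1 := by simp [eX]

lemma eX_perm (π : Equiv.Perm X) (x : X) (t : X) : eX x (π.symm t) = eX (π x) t := by
  simp only [eX, Equiv.symm_apply_eq]

/-- the left cocycle homomorphism -/
noncomputable def Phi (hnd : Nondegenerate S) : FreeMonoid X →* SD X :=
  FreeMonoid.lift (fun x => ⟨eX x, sig hnd x⟩)

lemma Phi_of (hnd : Nondegenerate S) (x : X) : Phi hnd (FreeMonoid.of x) = ⟨eX x, sig hnd x⟩ :=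
  FreeMonoid.lift_eval_of _ x

lemma Phi_rel (hnd : Nondegenerate S) (hinv : InvolutiveSol S) (hbr : BraidedSol S)
    {a b : FreeMonoid X} (h : ybRel S a b) : Phi hnd a = Phi hnd b := by
  obtain ⟨x, y, ha, hb⟩ := h
  subst ha hb
  rw [map_mul, map_mul, Phi_of, Phi_of, Phi_of, Phi_of]
  show SD.mk _ _ = SD.mk _ _
  simp only [SD.mul_a, SD.mul_p, SD.mk.injEq]
  constructor
  · funext t
    rw [eX_perm, eX_perm]
    rw [show sig hnd x y = (S (x, y)).1 from rfl]
    rw [show sig hnd (S (x,y)).1 (S (x,y)).2 = x from I1 hinv x y]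
    exact add_comm _ _
  · ext u
    show sig hnd x (sig hnd y u) = _
    simp only [sig_apply, Equiv.Perm.mul_apply]
    exact (B1 hbr x y u).symm

/-- the right (mirror) cocycle homomorphism -/
noncomputable def Psi (hnd : Nondegenerate S) : FreeMonoid X →* (SD X)ᵐᵒᵖ :=
  FreeMonoid.lift (fun x => MulOpposite.op ⟨eX x, tauE hnd x⟩)

lemma Psi_of (hnd : Nondegenerate S) (x : X) :
    Psi hnd (FreeMonoid.of x) = MulOpposite.op ⟨eX x, tauE hnd x⟩ :=
  FreeMonoid.lift_eval_of _ x

lemma Psi_rel (hnd : Nondegenerate S) (hinv : InvolutiveSol S) (hbr : BraidedSol S)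
    {a b : FreeMonoid X} (h : ybRel S a b) : Psi hnd a = Psi hnd b := by
  obtain ⟨x, y, ha, hb⟩ := h
  subst ha hb
  rw [map_mul, map_mul, Psi_of, Psi_of, Psi_of, Psi_of, ← MulOpposite.op_mul,
    ← MulOpposite.op_mul]
  apply congrArg
  show SD.mk _ _ = SD.mk _ _
  simp only [SD.mul_a, SD.mul_p, SD.mk.injEq]
  constructor
  · funext t
    rw [eX_perm, eX_perm]
    rw [show tauE hnd y x = (S (x, y)).2 from rfl]
    rw [show tauE hnd (S (x,y)).2 (S (x,y)).1 = y from I2 hinv x y]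
    exact add_comm _ _
  · ext u
    show tauE hnd y (tauE hnd x u) = _
    simp only [tauE_apply, Equiv.Perm.mul_apply]
    exact B3 hbr u x y

end Homs

section Words

variable {X : Type*} {S : X × X → X × X} [DecidableEq X]

/-- image of a word in the structure monoid -/
def mkw (S : X × X → X × X) (l : List X) : StructureMonoid S :=
  (conGen (ybRel S)).mk' (FreeMonoid.ofList l)

lemma mkw_nil : mkw S [] = 1 := rfl

lemma mkw_cons (x : X) (l : List X) : mkw S (x :: l) = smi S x * mkw S l := by
  rw [mkw, FreeMonoid.ofList_cons, map_mul]; rfl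

lemma mkw_append (l l' : List X) : mkw S (l ++ l') = mkw S l * mkw S l' := by
  rw [mkw, FreeMonoid.ofList_append, map_mul]; rfl

lemma mkw_singleton (x : X) : mkw S [x] = smi S x := rfl

lemma smi_rel (x y : X) :
    smi S x * smi S y = smi S (S (x, y)).1 * smi S (S (x, y)).2 := by
  have h1 : smi S x * smi S y
      = (conGen (ybRel S)).mk' (FreeMonoid.of x * FreeMonoid.of y) := (map_mul _ _ _).symm
  have h2 : smi S (S (x, y)).1 * smi S (S (x, y)).2
      = (conGen (ybRel S)).mk'
        (FreeMonoid.of (S (x, y)).1 * FreeMonoid.of (S (x, y)).2) := (map_mul _ _ _).symm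
  rw [h1, h2]
  exact (Con.eq _).mpr (ConGen.Rel.of _ _ ⟨x, y, rfl, rfl⟩)

lemma mem_closure_smi (m : StructureMonoid S) :
    m ∈ Submonoid.closure (Set.range (smi S)) := by
  induction m using Con.induction_on with
  | H w =>
    induction w using FreeMonoid.inductionOn' with
    | one => exact Submonoid.one_mem _
    | of_mul x l ih =>
      rw [Con.coe_mul]
      exact Submonoid.mul_mem _ (Submonoid.subset_closure ⟨x, rfl⟩) ih

variable (hnd : Nondegenerate S)

/-- the left word cocycle -/
noncomputable def vL (l : List X) : X → ℕ := (Phi hnd (FreeMonoid.ofList l)).a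

noncomputable def pL (l : List X) : Equiv.Perm X := (Phi hnd (FreeMonoid.ofList l)).p

/-- the right word cocycle -/
noncomputable def vR (l : List X) : X → ℕ :=
  (MulOpposite.unop (Psi hnd (FreeMonoid.ofList l))).a

lemma vL_nil : vL hnd ([] : List X) = fun _ => 0 := by
  rw [vL, FreeMonoid.ofList_nil, map_one]; rfl

lemma vL_cons (x : X) (l : List X) :
    vL hnd (x :: l) = fun t => eX x t + vL hnd l ((sig hnd x).symm t) := by
  rw [vL, vL, FreeMonoid.ofList_cons, map_mul, Phi_of]; rfl

lemma pL_cons (x : X) (l : List X) : pL hnd (x :: l) = sig hnd x * pL hnd l := by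
  rw [pL, pL, FreeMonoid.ofList_cons, map_mul, Phi_of]; rfl

lemma vL_append (l l' : List X) :
    vL hnd (l ++ l') = fun t => vL hnd l t + vL hnd l' ((pL hnd l).symm t) := by
  rw [vL, vL, vL, pL, FreeMonoid.ofList_append, map_mul]; rfl

lemma vR_nil : vR hnd ([] : List X) = fun _ => 0 := by
  rw [vR, FreeMonoid.ofList_nil, map_one]; rfl

lemma vR_snoc (l : List X) (x : X) :
    vR hnd (l ++ [x]) = fun t => eX x t + vR hnd l ((tauE hnd x).symm t) := by
  rw [vR, vR, FreeMonoid.ofList_append, map_mul, FreeMonoid.ofList_singleton, Psi_of]; rfl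


variable (hinv : InvolutiveSol S) (hbr : BraidedSol S)
include hnd hinv hbr

lemma conGen_le_ker_Phi : conGen (ybRel S) ≤ Con.ker (Phi hnd) :=
  Con.conGen_le.mpr fun _ _ h => (Con.ker_rel _).mpr (Phi_rel hnd hinv hbr h)

lemma conGen_le_ker_Psi : conGen (ybRel S) ≤ Con.ker (Psi hnd) :=
  Con.conGen_le.mpr fun _ _ h => (Con.ker_rel _).mpr (Psi_rel hnd hinv hbr h)

/-- the left cocycle on the structure monoid -/
noncomputable def VL : StructureMonoid S →* SD X :=
  (conGen (ybRel S)).lift (Phi hnd) (conGen_le_ker_Phi hnd hinv hbr)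

noncomputable def VR : StructureMonoid S →* (SD X)ᵐᵒᵖ :=
  (conGen (ybRel S)).lift (Psi hnd) (conGen_le_ker_Psi hnd hinv hbr)

lemma VL_mkw (l : List X) : VL hnd hinv hbr (mkw S l) = Phi hnd (FreeMonoid.ofList l) :=
  Con.lift_mk' _ _

lemma VR_mkw (l : List X) : VR hnd hinv hbr (mkw S l) = Psi hnd (FreeMonoid.ofList l) :=
  Con.lift_mk' _ _

lemma vL_mkw_eq {l l' : List X} (h : mkw S l = mkw S l') : vL hnd l = vL hnd l' := by
  have h2 := congrArg (VL hnd hinv hbr) h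
  rw [VL_mkw, VL_mkw] at h2
  exact congrArg SD.a h2

lemma vR_mkw_eq {l l' : List X} (h : mkw S l = mkw S l') : vR hnd l = vR hnd l' := by
  have h2 := congrArg (VR hnd hinv hbr) h
  rw [VR_mkw, VR_mkw] at h2
  exact congrArg (fun u => (MulOpposite.unop u).a) h2

end Words

section Core

variable {X : Type*} {S : X × X → X × X} [DecidableEq X] [Fintype X]
variable (hnd : Nondegenerate S)

lemma sum_eX (x : X) : ∑ t, eX x t = 1 := by simp [eX]

lemma sum_vL (l : List X) : ∑ t, vL hnd l t = l.length := by
  induction l with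
  | nil => simp [vL_nil]
  | cons x l ih =>
    rw [vL_cons]
    simp only [List.length_cons]
    rw [Finset.sum_add_distrib, sum_eX, Equiv.sum_comp (sig hnd x).symm (vL hnd l), ih]
    omega

lemma sum_vR (l : List X) : ∑ t, vR hnd l t = l.length := by
  induction l using List.reverseRecOn with
  | nil => simp [vR_nil]
  | append_singleton s y ih =>
    rw [vR_snoc]
    simp only [List.length_append, List.length_singleton]
    rw [Finset.sum_add_distrib, sum_eX, Equiv.sum_comp (tauE hnd y).symm (vR hnd s), ih]
    omega

lemma divL : ∀ (l : List X) (x : X), 0 < vL hnd l x →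
    ∃ l', mkw S l = mkw S (x :: l') ∧ l'.length + 1 = l.length := by
  intro l
  induction l with
  | nil => intro x h; rw [vL_nil] at h; exact absurd h (lt_irrefl 0)
  | cons y l ih =>
    intro x h
    by_cases hxy : x = y
    · exact ⟨l, by rw [hxy], rfl⟩
    · rw [vL_cons] at h
      simp only [eX, if_neg hxy, Nat.zero_add] at h
      obtain ⟨l'', hl'', hlen⟩ := ih _ h
      refine ⟨(S (y, (sig hnd y).symm x)).2 :: l'', ?_, by simp [← hlen]⟩
      have h1 : mkw S (y :: l) = mkw S (y :: (sig hnd y).symm x :: l'') := by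
        rw [mkw_cons, mkw_cons, hl'']
      rw [h1, mkw_cons, mkw_cons, mkw_cons, mkw_cons, ← mul_assoc, ← mul_assoc,
        smi_rel y ((sig hnd y).symm x)]
      have h2 : (S (y, (sig hnd y).symm x)).1 = x := by
        rw [← sig_apply hnd]
        exact (sig hnd y).apply_symm_apply x
      rw [h2]

lemma divR : ∀ (l : List X) (x : X), 0 < vR hnd l x →
    ∃ l', mkw S l = mkw S (l' ++ [x]) ∧ l'.length + 1 = l.length := by
  intro l
  induction l using List.reverseRecOn with
  | nil => intro x h; rw [vR_nil] at h; exact absurd h (lt_irrefl 0)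
  | append_singleton s y ih =>
    intro x h
    by_cases hxy : x = y
    · exact ⟨s, by rw [hxy], by simp⟩
    · rw [vR_snoc] at h
      simp only [eX, if_neg hxy, Nat.zero_add] at h
      obtain ⟨s'', hs'', hlen⟩ := ih _ h
      refine ⟨s'' ++ [(S ((tauE hnd y).symm x, y)).1], ?_, by simp at hlen ⊢; omega⟩
      have h1 : mkw S (s ++ [y]) = mkw S ((s'' ++ [(tauE hnd y).symm x]) ++ [y]) := by
        rw [mkw_append, mkw_append, hs'']
      have h2 : (S ((tauE hnd y).symm x, y)).2 = x := by
        rw [← tauE_apply hnd]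
        exact (tauE hnd y).apply_symm_apply x
      have key : smi S ((tauE hnd y).symm x) * smi S y
          = smi S (S ((tauE hnd y).symm x, y)).1 * smi S x := by
        rw [smi_rel ((tauE hnd y).symm x) y, h2]
      rw [h1, List.append_assoc]
      show mkw S (s'' ++ [(tauE hnd y).symm x, y]) = _
      rw [List.append_assoc]
      show _ = mkw S (s'' ++ [(S ((tauE hnd y).symm x, y)).1, x])
      simp only [mkw_append, mkw_cons, mkw_nil, mul_one]
      rw [key]

variable (hinv : InvolutiveSol S) (hbr : BraidedSol S)
include hnd hinv hbr

lemma injL : ∀ (n : ℕ) (l l' : List X), l.length = n → vL hnd l = vL hnd l' →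
    mkw S l = mkw S l' := by
  intro n
  induction n with
  | zero =>
    intro l l' hl hv
    have h0 : l = [] := List.length_eq_zero_iff.mp hl
    subst h0
    have h1 : l' = [] := by
      apply List.length_eq_zero_iff.mp
      rw [← sum_vL hnd l', ← hv, sum_vL hnd, hl]
    rw [h1]
  | succ n ih =>
    intro l l' hl hv
    cases l with
    | nil => simp at hl
    | cons x r =>
      have hx : 0 < vL hnd l' x := by
        rw [← hv, vL_cons]
        simp [eX_self]
      obtain ⟨r', hr', _⟩ := divL hnd l' x hx
      have hv2 : vL hnd (x :: r) = vL hnd (x :: r') := by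
        rw [hv, vL_mkw_eq hnd hinv hbr hr']
      have hrr : vL hnd r = vL hnd r' := by
        funext t
        have h3 := congrFun hv2 (sig hnd x t)
        rw [vL_cons, vL_cons] at h3
        simp only [Equiv.symm_apply_apply] at h3
        exact Nat.add_left_cancel h3
      have h4 := ih r r' (by simpa using hl) hrr
      rw [hr', mkw_cons, mkw_cons, h4]

lemma injR : ∀ (n : ℕ) (l l' : List X), l.length = n → vR hnd l = vR hnd l' →
    mkw S l = mkw S l' := by
  intro n
  induction n with
  | zero =>
    intro l l' hl hv
    have h0 : l = [] := List.length_eq_zero_iff.mp hl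
    subst h0
    have h1 : l' = [] := by
      apply List.length_eq_zero_iff.mp
      rw [← sum_vR hnd l', ← hv, sum_vR hnd, hl]
    rw [h1]
  | succ n ih =>
    intro l l' hl hv
    rcases l.eq_nil_or_concat' with h0 | ⟨r, x, h0⟩
    · subst h0; simp at hl
    · subst h0
      have hx : 0 < vR hnd l' x := by
        rw [← hv, vR_snoc]
        simp [eX_self]
      obtain ⟨r', hr', _⟩ := divR hnd l' x hx
      have hv2 : vR hnd (r ++ [x]) = vR hnd (r' ++ [x]) := by
        rw [hv, vR_mkw_eq hnd hinv hbr hr']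
      have hrr : vR hnd r = vR hnd r' := by
        funext t
        have h3 := congrFun hv2 (tauE hnd x t)
        rw [vR_snoc, vR_snoc] at h3
        simp only [Equiv.symm_apply_apply] at h3
        exact Nat.add_left_cancel h3
      have h4 := ih r r' (by simp at hl; omega) hrr
      rw [hr', mkw_append, mkw_append, h4]

omit hinv hbr in
lemma surjL : ∀ (n : ℕ) (a : X → ℕ), ∑ t, a t = n → ∃ l : List X, vL hnd l = a := by
  intro n
  induction n with
  | zero =>
    intro a ha
    refine ⟨[], ?_⟩
    rw [vL_nil]
    funext t
    exact ((Finset.sum_eq_zero_iff.mp ha) t (Finset.mem_univ t)).symm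
  | succ n ih =>
    intro a ha
    have hex : ∃ x, a x ≠ 0 := by
      by_contra hc
      push_neg at hc
      rw [Finset.sum_eq_zero (fun t _ => hc t)] at ha
      exact Nat.succ_ne_zero n ha.symm
    obtain ⟨x, hx⟩ := hex
    have hle : ∀ t, eX x t ≤ a t := by
      intro t
      by_cases h : t = x
      · subst h; simp [eX_self]; omega
      · simp [eX, if_neg h]
    set b : X → ℕ := fun s => a (sig hnd x s) - eX x (sig hnd x s) with hb
    have hsb : ∑ s, b s = n := by
      have h5 : ∑ s, b s = ∑ t, (a t - eX x t) := by
        simpa [hb] using Equiv.sum_comp (sig hnd x) (fun t => a t - eX x t)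
      have h6 : ∑ t, (a t - eX x t) + ∑ t, eX x t = ∑ t, a t := by
        rw [← Finset.sum_add_distrib]
        exact Finset.sum_congr rfl fun t _ => Nat.sub_add_cancel (hle t)
      rw [sum_eX, ha] at h6
      omega
    obtain ⟨l, hl⟩ := ih b hsb
    refine ⟨x :: l, ?_⟩
    rw [vL_cons, hl]
    funext t
    have h7 : b ((sig hnd x).symm t) = a t - eX x t := by
      rw [hb]
      simp only [Equiv.apply_symm_apply]
    rw [h7]
    exact Nat.add_sub_cancel' (hle t)

end Core


section Main

variable {X : Type*} {S : X × X → X × X} [DecidableEq X] [Fintype X]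
lemma exists_word (m : StructureMonoid S) : ∃ l : List X, m = mkw S l :=
  Con.induction_on m fun w => ⟨FreeMonoid.toList w, rfl⟩

variable (hnd : Nondegenerate S) (hinv : InvolutiveSol S) (hbr : BraidedSol S)
include hnd hinv hbr

/-- the additive part of the left cocycle on the monoid -/
noncomputable def vM (m : StructureMonoid S) : X → ℕ := (VL hnd hinv hbr m).a

noncomputable def pM (m : StructureMonoid S) : Equiv.Perm X := (VL hnd hinv hbr m).p

noncomputable def vr (m : StructureMonoid S) : X → ℕ :=
  (MulOpposite.unop (VR hnd hinv hbr m)).a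

noncomputable def pr (m : StructureMonoid S) : Equiv.Perm X :=
  (MulOpposite.unop (VR hnd hinv hbr m)).p

lemma vM_mkw (l : List X) : vM hnd hinv hbr (mkw S l) = vL hnd l :=
  congrArg SD.a (VL_mkw hnd hinv hbr l)

lemma vr_mkw (l : List X) : vr hnd hinv hbr (mkw S l) = vR hnd l :=
  congrArg (fun u => (MulOpposite.unop u).a) (VR_mkw hnd hinv hbr l)

lemma vM_mul (m m' : StructureMonoid S) :
    vM hnd hinv hbr (m * m')
      = fun t => vM hnd hinv hbr m t + vM hnd hinv hbr m' ((pM hnd hinv hbr m).symm t) := by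
  rw [vM, map_mul]; rfl

lemma vr_mul (m m' : StructureMonoid S) :
    vr hnd hinv hbr (m * m')
      = fun t => vr hnd hinv hbr m' t + vr hnd hinv hbr m ((pr hnd hinv hbr m').symm t) := by
  rw [vr, map_mul, MulOpposite.unop_mul]; rfl

lemma vM_smi (x : X) : vM hnd hinv hbr (smi S x) = eX x := by
  rw [show smi S x = mkw S [x] from rfl, vM_mkw]
  funext t
  rw [vL_cons]
  simp [vL_nil]

lemma vr_smi (x : X) : vr hnd hinv hbr (smi S x) = eX x := by
  rw [show smi S x = mkw S [x] from rfl, vr_mkw]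
  have h := vR_snoc hnd ([] : List X) x
  rw [List.nil_append] at h
  rw [h]
  funext t
  simp [vR_nil]

lemma pr_smi (x : X) : pr hnd hinv hbr (smi S x) = tauE hnd x := by
  show (MulOpposite.unop (VR hnd hinv hbr ((conGen (ybRel S)).mk' (FreeMonoid.of x)))).p = _
  rw [show VR hnd hinv hbr ((conGen (ybRel S)).mk' (FreeMonoid.of x))
      = Psi hnd (FreeMonoid.of x) from Con.lift_mk' _ _, Psi_of]
  rfl

lemma vM_inj {m m' : StructureMonoid S} (h : vM hnd hinv hbr m = vM hnd hinv hbr m') :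
    m = m' := by
  obtain ⟨l, rfl⟩ := exists_word m
  obtain ⟨l', rfl⟩ := exists_word m'
  rw [vM_mkw, vM_mkw] at h
  exact injL hnd hinv hbr l.length l l' rfl h

lemma vr_inj {m m' : StructureMonoid S} (h : vr hnd hinv hbr m = vr hnd hinv hbr m') :
    m = m' := by
  obtain ⟨l, rfl⟩ := exists_word m
  obtain ⟨l', rfl⟩ := exists_word m'
  rw [vr_mkw, vr_mkw] at h
  exact injR hnd hinv hbr l.length l l' rfl h

lemma vM_surj (a : X → ℕ) : ∃ m : StructureMonoid S, vM hnd hinv hbr m = a := by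
  obtain ⟨l, hl⟩ := surjL hnd (∑ t, a t) a rfl
  exact ⟨mkw S l, by rw [vM_mkw, hl]⟩

lemma ldvd_iff {m m' : StructureMonoid S} :
    LDvd m m' ↔ ∀ t, vM hnd hinv hbr m t ≤ vM hnd hinv hbr m' t := by
  constructor
  · rintro ⟨c, rfl⟩ t
    rw [vM_mul]
    exact Nat.le_add_right _ _
  · intro h
    obtain ⟨c, hc⟩ := vM_surj hnd hinv hbr
      (fun s => vM hnd hinv hbr m' (pM hnd hinv hbr m s) - vM hnd hinv hbr m (pM hnd hinv hbr m s))
    refine ⟨c, (vM_inj hnd hinv hbr ?_).symm⟩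
    rw [vM_mul, hc]
    funext t
    simp only [Equiv.apply_symm_apply]
    exact Nat.add_sub_cancel' (h t)

lemma cancel_smi {m m' : StructureMonoid S} (x : X)
    (h : m * smi S x = m' * smi S x) : m = m' := by
  apply vr_inj hnd hinv hbr
  have h2 := congrArg (vr hnd hinv hbr) h
  rw [vr_mul, vr_mul] at h2
  funext t
  have h3 := congrFun h2 (pr hnd hinv hbr (smi S x) t)
  simp only [Equiv.symm_apply_apply] at h3
  exact Nat.add_left_cancel h3

lemma cancel_right {m m' e : StructureMonoid S} (h : m * e = m' * e) : m = m' := by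
  obtain ⟨l, rfl⟩ := exists_word e
  induction l using List.reverseRecOn generalizing m m' with
  | nil =>
    rw [mkw_nil, mul_one, mul_one] at h
    exact h
  | append_singleton r x ih =>
    rw [mkw_append, mkw_singleton, ← mul_assoc, ← mul_assoc] at h
    exact ih (cancel_smi hnd hinv hbr x h)

end Main

/-- The generators of the structure monoid admit a right lcm `Δ`, and `Δ` is a Garside
element: its left divisors coincide with its right divisors, form a finite set, and
generate the monoid. -/
theorem stmt7 {X : Type*} [Finite X] (S : X × X → X × X)
    (hnd : Nondegenerate S) (hinv : InvolutiveSol S) (hbr : BraidedSol S) :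
    ∃ Δ : StructureMonoid S,
      IsRightLcm (fun x : X => smi S x) Δ ∧
      (∀ a : StructureMonoid S, (∃ c, Δ = a * c) ↔ (∃ c, Δ = c * a)) ∧
      {a : StructureMonoid S | ∃ c, Δ = a * c}.Finite ∧
      Submonoid.closure {a : StructureMonoid S | ∃ c, Δ = a * c} = ⊤ := by
  classical
  haveI := Fintype.ofFinite X
  obtain ⟨Δ, hΔ⟩ := vM_surj hnd hinv hbr (fun _ => 1)
  -- characterization of left divisors of Δ
  have hdvd : ∀ a : StructureMonoid S, (∃ c, Δ = a * c) ↔ ∀ t, vM hnd hinv hbr a t ≤ 1 := by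
    intro a
    constructor
    · intro h t
      have := (ldvd_iff hnd hinv hbr).mp h t
      rwa [hΔ] at this
    · intro h
      exact (ldvd_iff hnd hinv hbr).mpr (by intro t; rw [hΔ]; exact h t)
  -- right divisors have small coordinates
  have hrd : ∀ a c : StructureMonoid S, Δ = c * a → ∀ t, vM hnd hinv hbr a t ≤ 1 := by
    intro a c hca t
    have h2 := congrArg (vM hnd hinv hbr) hca
    rw [vM_mul, hΔ] at h2
    have h3 := congrFun h2 (pM hnd hinv hbr c t)
    simp only [Equiv.symm_apply_apply] at h3
    omega
  -- finiteness
  have hLfin : {a : StructureMonoid S | ∃ c, Δ = a * c}.Finite := by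
    haveI : Finite {f : X → ℕ | ∀ t, f t ≤ 1} := by
      apply Finite.of_injective
        (fun f => (fun t => (⟨f.1 t, Nat.lt_succ_of_le (f.2 t)⟩ : Fin 2) : X → Fin 2))
      intro f g hfg
      apply Subtype.ext
      funext t
      have := congrFun hfg t
      exact congrArg Fin.val this
    have hT : {f : X → ℕ | ∀ t, f t ≤ 1}.Finite := Set.toFinite _
    have hsub : {a : StructureMonoid S | ∃ c, Δ = a * c}
        ⊆ vM hnd hinv hbr ⁻¹' {f : X → ℕ | ∀ t, f t ≤ 1} := by
      intro a ha
      exact (hdvd a).mp ha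
    exact Set.Finite.subset (hT.preimage (fun a _ b _ h => vM_inj hnd hinv hbr h)) hsub
  refine ⟨Δ, ⟨?_, ?_⟩, ?_, hLfin, ?_⟩
  · -- each generator divides Δ
    intro x
    refine (hdvd (smi S x)).mpr ?_
    intro t
    rw [vM_smi]
    simp [eX]
    split <;> omega
  · -- Δ divides common multiples
    intro w hw
    apply (ldvd_iff hnd hinv hbr).mpr
    intro t
    rw [hΔ]
    have h1 := (ldvd_iff hnd hinv hbr).mp (hw t) t
    rw [vM_smi, eX_self] at h1
    exact h1
  · -- left divisors = right divisors
    intro a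
    constructor
    · intro ha
      -- the complement map on the finite set of left divisors
      set L := {a : StructureMonoid S | ∃ c, Δ = a * c} with hL
      haveI : Finite ↥L := hLfin.to_subtype
      have hFmem : ∀ b : ↥L, Classical.choose b.2 ∈ L := by
        intro b
        have hspec := Classical.choose_spec b.2
        apply (hdvd _).mpr
        intro t
        have h2 := congrArg (vM hnd hinv hbr) hspec
        rw [vM_mul, hΔ] at h2
        have h3 := congrFun h2 (pM hnd hinv hbr b.1 t)
        simp only [Equiv.symm_apply_apply] at h3
        omega
      set F : ↥L → ↥L := fun b => ⟨Classical.choose b.2, hFmem b⟩ with hF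
      have hFinj : Function.Injective F := by
        intro b b' hbb
        have h1 := Classical.choose_spec b.2
        have h2 := Classical.choose_spec b'.2
        have h3 : Classical.choose b.2 = Classical.choose b'.2 := congrArg Subtype.val hbb
        rw [h3] at h1
        apply Subtype.ext
        exact cancel_right hnd hinv hbr (h1.symm.trans h2)
      have hFsurj := Finite.injective_iff_surjective.mp hFinj
      obtain ⟨d, hd⟩ := hFsurj ⟨a, ha⟩
      have h1 := Classical.choose_spec d.2
      have h2 : Classical.choose d.2 = a := congrArg Subtype.val hd
      exact ⟨d.1, by rw [← h2]; exact h1⟩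
    · intro ⟨c, hc⟩
      exact (hdvd a).mpr (hrd a c hc)
  · -- the divisors generate
    rw [eq_top_iff]
    intro m _
    apply Submonoid.closure_mono (s := Set.range (smi S))
    · rintro b ⟨x, rfl⟩
      refine (hdvd (smi S x)).mpr ?_
      intro t
      rw [vM_smi]
      simp [eX]
      split <;> omega
    · exact mem_closure_smi m


end YBE
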